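/- Let N and n be positive natural numbers and let Ψ be a real symmetric positive definite matrix indexed by Fin N × Fin n that is block tridiagonal, with blocks labelled 1,…,N (block index i : Fin N corresponds to label i + 1). Define the odd–even order ≼ on block labels by: r ≼ c iff (r is odd and c is even) or (r and c have the same parity and r ≤ c). Then there exists a matrix L indexed by Fin N × Fin n such that: (i) L((i,a),(j,b)) = 0 whenever the block label of (i,a) strictly precedes that of (j,b) in ≼, or the block labels are equal and a < b (L is lower triangular with respect to the odd–even ordering); (ii) every diagonal entry of L is strictly positive; (iii) L · Lᵀ = Ψ; and (iv) for block labels r, c with c strictly preceding r in ≼, the block L(r,c) is the zero block unless either c is odd and r ∈ {c − 1, c + 1}, or c is even and r = c + 2. In other words, after the single-stage odd–even permutation the Cholesky factor has fill-in only in the blocks directly below the diagonal of the trailing even-indexed part. -/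

import Mathlib

open Matrix

/-- The odd–even (single-stage permutation) order on block labels `1,…,N`:
`r ≼ c` iff `r` is odd and `c` is even, or `r` and `c` have the same parity and `r ≤ c`. -/
def oddEvenLe (r c : ℕ) : Prop :=
  (Odd r ∧ Even c) ∨ (r % 2 = c % 2 ∧ r ≤ c)

/-- The fill-in pattern: `oePat r c` holds iff row label `r`, column label `c` is a
possibly nonzero below-diagonal block of the permuted Cholesky factor. -/
def oePat (r c : ℕ) : Prop :=
  (Odd c ∧ (r = c - 1 ∨ r = c + 1)) ∨ (Even c ∧ r = c + 2)

lemma oddEvenLe_total (r c : ℕ) : oddEvenLe r c ∨ oddEvenLe c r := by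
  unfold oddEvenLe; simp only [Nat.odd_iff, Nat.even_iff]; omega

/-- The position of block index `i` (label `i+1`) in the odd–even ordering. -/
def bRank (N i : ℕ) : ℕ := if i % 2 = 0 then i / 2 else (N + 1) / 2 + i / 2

lemma bRank_lt_iff {N i j : ℕ} (hi : i < N) (hj : j < N) :
    bRank N i < bRank N j ↔ (oddEvenLe (i + 1) (j + 1) ∧ i ≠ j) := by
  unfold bRank oddEvenLe; simp only [Nat.odd_iff, Nat.even_iff]
  split_ifs <;> omega

lemma bRank_lt {N i : ℕ} (hi : i < N) : bRank N i < N := by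
  unfold bRank; split_ifs <;> omega

lemma bRank_inj {N i j : ℕ} (hi : i < N) (hj : j < N) (h : bRank N i = bRank N j) : i = j := by
  unfold bRank at h; split_ifs at h <;> omega

lemma mul_add_lt {x y a b n : ℕ} (h : x < y) (ha : a < n) : x * n + a < y * n + b :=
  calc x * n + a < x * n + n := by omega
    _ = (x + 1) * n := by ring
    _ ≤ y * n := Nat.mul_le_mul_right n h
    _ ≤ y * n + b := Nat.le_add_right _ _

lemma rank_eq_decomp {x y a b n : ℕ} (ha : a < n) (hb : b < n)
    (h : x * n + a = y * n + b) : x = y ∧ a = b := by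
  rcases lt_trichotomy x y with hlt | heq | hgt
  · exact absurd h (Nat.ne_of_lt (mul_add_lt hlt ha))
  · constructor
    · exact heq
    · subst heq; omega
  · exact absurd h.symm (Nat.ne_of_lt (mul_add_lt hgt hb))

lemma rank_lt_decomp {x y a b n : ℕ} (ha : a < n) (hb : b < n)
    (h : x * n + a < y * n + b) : x < y ∨ (x = y ∧ a < b) := by
  rcases lt_trichotomy x y with hlt | heq | hgt
  · exact Or.inl hlt
  · subst heq; omega
  · have := mul_add_lt (b := a) hgt hb; omega

lemma oePat_closure {p r1 r2 : ℕ} (h1 : oePat r1 p) (h2 : oePat r2 p)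
    (h : oddEvenLe r2 r1) : r1 = r2 ∨ oePat r1 r2 := by
  unfold oePat oddEvenLe at *; simp only [Nat.odd_iff, Nat.even_iff] at *; omega

lemma gap_lemma {i m : ℕ} (h : oddEvenLe (m + 1) (i + 1)) (hne : i ≠ m)
    (hnp : ¬ oePat (i + 1) (m + 1)) : i + 1 < m ∨ m + 1 < i := by
  unfold oePat oddEvenLe at *; simp only [Nat.odd_iff, Nat.even_iff] at *; omega

lemma posDef_conj_of_invertible {m : Type*} [Fintype m] [DecidableEq m]
    {A B : Matrix m m ℝ} (hA : A.PosDef) [Invertible B] : (B * A * Bᴴ).PosDef := by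
  refine Matrix.PosDef.of_dotProduct_mulVec_pos ?_ (fun x hx => ?_)
  · show (B * A * Bᴴ)ᴴ = B * A * Bᴴ
    rw [conjTranspose_mul, conjTranspose_mul, conjTranspose_conjTranspose, hA.1.eq,
      Matrix.mul_assoc]
  · have hBx : Bᴴ *ᵥ x ≠ 0 := by
      intro h
      apply hx
      exact Matrix.mulVec_injective_of_invertible Bᴴ
        (by rw [h, Matrix.mulVec_zero] : Bᴴ *ᵥ x = Bᴴ *ᵥ 0)
    have h2 := hA.dotProduct_mulVec_pos hBx
    have key : star x ⬝ᵥ ((B * A * Bᴴ) *ᵥ x) = star (Bᴴ *ᵥ x) ⬝ᵥ (A *ᵥ (Bᴴ *ᵥ x)) := by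
      rw [star_mulVec, conjTranspose_conjTranspose, dotProduct_mulVec, dotProduct_mulVec,
        Matrix.vecMul_vecMul, Matrix.mul_assoc, dotProduct_mulVec, Matrix.vecMul_vecMul,
        Matrix.mul_assoc]
    rw [key]; exact h2

lemma cholesky_exists {m : Type*} [Fintype m] [LinearOrder m] [LocallyFiniteOrderBot m]
    (S : Matrix m m ℝ) (hS : S.PosDef) :
    ∃ L : Matrix m m ℝ, (∀ x y, x < y → L x y = 0) ∧ (∀ x, 0 < L x x) ∧ L * Lᵀ = S := by
  classical
  set L₀ := LDL.lower hS with hL₀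
  have h1 : BlockTriangular (LDL.lowerInv hS) OrderDual.toDual :=
    fun x y h => LDL.lowerInv_triangular hS h
  have h2 : BlockTriangular L₀ OrderDual.toDual :=
    blockTriangular_inv_of_blockTriangular h1
  have hL₀tri : ∀ x y, x < y → L₀ x y = 0 := fun x y hxy => h2 hxy
  have hD : (LDL.diag hS).PosDef := by
    rw [LDL.diag_eq_lowerInv_conj]
    exact posDef_conj_of_invertible hS
  have hd : ∀ i, 0 < LDL.diagEntries hS i := by
    rw [LDL.diag] at hD
    exact (Matrix.posDef_diagonal_iff).mp hD
  have hunit : IsUnit (LDL.lowerInv hS).det := (isUnit_iff_isUnit_det _).mp (isUnit_of_invertible _)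
  have hdetmul : L₀.det * (LDL.lowerInv hS).det = 1 := by
    rw [hL₀, LDL.lower, ← det_mul, Matrix.nonsing_inv_mul _ hunit, det_one]
  have hdet : L₀.det ≠ 0 := fun h => by simp [h] at hdetmul
  have hprod : ∏ i, L₀ i i ≠ 0 := by
    rwa [← Matrix.det_of_lowerTriangular L₀ h2]
  have hdiag0 : ∀ i, L₀ i i ≠ 0 := fun i =>
    Finset.prod_ne_zero_iff.mp hprod i (Finset.mem_univ i)
  set s : m → ℝ := fun i => Real.sqrt (LDL.diagEntries hS i) * (if L₀ i i < 0 then -1 else 1)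
    with hs
  set L := L₀ * Matrix.diagonal s with hL
  have hSd : L₀ * LDL.diag hS * L₀ᵀ = S := by
    have := LDL.lower_conj_diag hS
    rwa [conjTranspose_eq_transpose_of_trivial] at this
  refine ⟨L, ?_, ?_, ?_⟩
  · intro x y hxy
    rw [hL, Matrix.mul_diagonal, hL₀tri x y hxy, zero_mul]
  · intro x
    rw [hL, Matrix.mul_diagonal, hs]
    dsimp only
    have hsq := Real.sqrt_pos.mpr (hd x)
    rcases lt_or_gt_of_ne (hdiag0 x) with h | h
    · simp only [if_pos h]; nlinarith
    · simp only [if_neg (not_lt.mpr h.le)]; nlinarith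
  · rw [hL, Matrix.transpose_mul, Matrix.diagonal_transpose, Matrix.mul_assoc,
      ← Matrix.mul_assoc (Matrix.diagonal s), Matrix.diagonal_mul_diagonal, ← Matrix.mul_assoc]
    have : (fun i => s i * s i) = LDL.diagEntries hS := by
      funext i
      rw [hs]
      dsimp only
      have hsq : Real.sqrt (LDL.diagEntries hS i) * Real.sqrt (LDL.diagEntries hS i)
          = LDL.diagEntries hS i := Real.mul_self_sqrt (hd i).le
      split_ifs <;> nlinarith
    rw [this, ← LDL.diag, hSd]

lemma posDef_submatrix_equiv {l m : Type*} [Fintype l] [Fintype m] {M : Matrix m m ℝ}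
    (hM : M.PosDef) (e : l ≃ m) : (M.submatrix e e).PosDef := by
  refine Matrix.PosDef.of_dotProduct_mulVec_pos (hM.1.submatrix e) (fun x hx => ?_)
  have hx' : x ∘ e.symm ≠ 0 := by
    intro h
    apply hx
    funext i
    have := congrFun h (e i)
    simpa using this
  have h2 := hM.dotProduct_mulVec_pos hx'
  have key : star x ⬝ᵥ (M.submatrix e e *ᵥ x) = star (x ∘ e.symm) ⬝ᵥ (M *ᵥ (x ∘ e.symm)) := by
    rw [submatrix_mulVec_equiv]
    simp only [dotProduct, Function.comp_apply]
    exact Fintype.sum_equiv e _ _ (fun i => by simp)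
  rw [key]; exact h2

/-- After the single-stage odd–even permutation, the Cholesky factor of a block
tridiagonal symmetric positive definite matrix has fill-in only in the blocks directly
below the diagonal of the trailing even-indexed part: there exists `L`, lower triangular
with respect to the odd–even ordering of the block labels `i + 1`, with strictly positive
diagonal and `L * Lᵀ = Ψ`, such that for block labels `r, c` with `c` strictly preceding
`r`, the block `L(r, c)` vanishes unless `c` is odd and `r ∈ {c − 1, c + 1}`, or `c` is
even and `r = c + 2`. -/
theorem single_stage_cholesky_fill_in (N n : ℕ) (hN : 0 < N) (hn : 0 < n)
    (Ψ : Matrix (Fin N × Fin n) (Fin N × Fin n) ℝ) (hsym : Ψ.IsSymm) (hpd : Ψ.PosDef)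
    (htri : ∀ (i j : Fin N) (a b : Fin n),
      ((i : ℕ) + 1 < (j : ℕ) ∨ (j : ℕ) + 1 < (i : ℕ)) → Ψ (i, a) (j, b) = 0) :
    ∃ L : Matrix (Fin N × Fin n) (Fin N × Fin n) ℝ,
      (∀ (i j : Fin N) (a b : Fin n),
        ((oddEvenLe ((i : ℕ) + 1) ((j : ℕ) + 1) ∧ (i : ℕ) + 1 ≠ (j : ℕ) + 1) ∨
            (i = j ∧ (a : ℕ) < (b : ℕ))) →
          L (i, a) (j, b) = 0) ∧
      (∀ (i : Fin N) (a : Fin n), 0 < L (i, a) (i, a)) ∧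
      L * Lᵀ = Ψ ∧
      (∀ i j : Fin N,
        (oddEvenLe ((j : ℕ) + 1) ((i : ℕ) + 1) ∧ (j : ℕ) + 1 ≠ (i : ℕ) + 1) →
        ¬((Odd ((j : ℕ) + 1) ∧
              ((i : ℕ) + 1 = ((j : ℕ) + 1) - 1 ∨ (i : ℕ) + 1 = ((j : ℕ) + 1) + 1)) ∨
            (Even ((j : ℕ) + 1) ∧ (i : ℕ) + 1 = ((j : ℕ) + 1) + 2)) →
        ∀ (a b : Fin n), L (i, a) (j, b) = 0) := by
  classical
  have hbound : ∀ p : Fin N × Fin n, bRank N p.1 * n + (p.2 : ℕ) < N * n := by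
    intro p
    have h1 : bRank N (p.1 : ℕ) < N := bRank_lt p.1.isLt
    calc bRank N (p.1 : ℕ) * n + (p.2 : ℕ) < bRank N (p.1 : ℕ) * n + n := by
          have := p.2.isLt; omega
      _ = (bRank N (p.1 : ℕ) + 1) * n := by ring
      _ ≤ N * n := Nat.mul_le_mul_right n h1
  set κ : Fin N × Fin n → Fin (N * n) := fun p => ⟨bRank N p.1 * n + (p.2 : ℕ), hbound p⟩
    with hκ
  have hinj : Function.Injective κ := by
    rintro ⟨i, a⟩ ⟨j, b⟩ h
    have hv : bRank N (i : ℕ) * n + (a : ℕ) = bRank N (j : ℕ) * n + (b : ℕ) :=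
      congrArg Fin.val h
    obtain ⟨h1, h2⟩ := rank_eq_decomp a.isLt b.isLt hv
    have : (i : ℕ) = (j : ℕ) := bRank_inj i.isLt j.isLt h1
    exact Prod.ext (Fin.ext this) (Fin.ext h2)
  have hbij : Function.Bijective κ :=
    (Fintype.bijective_iff_injective_and_card κ).mpr ⟨hinj, by simp⟩
  set e : (Fin N × Fin n) ≃ Fin (N * n) := Equiv.ofBijective κ hbij with he
  set S : Matrix (Fin (N * n)) (Fin (N * n)) ℝ := Ψ.submatrix e.symm e.symm with hSdef
  have hS : S.PosDef := posDef_submatrix_equiv hpd e.symm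
  obtain ⟨L', hL'tri, hL'diag, hL'mul⟩ := cholesky_exists S hS
  set Lf : Matrix (Fin N × Fin n) (Fin N × Fin n) ℝ := L'.submatrix e e with hLf
  -- the product identity
  have hmul : Lf * Lfᵀ = Ψ := by
    rw [hLf, transpose_submatrix, submatrix_mul_equiv, hL'mul, hSdef, submatrix_submatrix,
      Equiv.symm_comp_self, submatrix_id_id]
  -- low-level triangularity in terms of ranks
  have hT : ∀ p q : Fin N × Fin n,
      bRank N p.1 * n + (p.2 : ℕ) < bRank N q.1 * n + (q.2 : ℕ) → Lf p q = 0 := by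
    intro p q h
    exact hL'tri (e p) (e q) h
  -- order hypothesis implies rank inequality
  have hOR : ∀ (i j : Fin N) (a b : Fin n),
      ((oddEvenLe ((i : ℕ) + 1) ((j : ℕ) + 1) ∧ (i : ℕ) + 1 ≠ (j : ℕ) + 1) ∨
        (i = j ∧ (a : ℕ) < (b : ℕ))) →
      bRank N (i : ℕ) * n + (a : ℕ) < bRank N (j : ℕ) * n + (b : ℕ) := by
    rintro i j a b (⟨h1, h2⟩ | ⟨h1, h2⟩)
    · have : bRank N (i : ℕ) < bRank N (j : ℕ) :=
        (bRank_lt_iff i.isLt j.isLt).mpr ⟨h1, by omega⟩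
      exact mul_add_lt this a.isLt
    · subst h1; omega
  have hdiagpos : ∀ (i : Fin N) (a : Fin n), 0 < Lf (i, a) (i, a) := by
    intro i a
    exact hL'diag (e (i, a))
  -- the key sparsity lemma
  have key : ∀ t : ℕ, ∀ (mb : Fin N) (c : Fin n) (i : Fin N) (a : Fin n),
      bRank N (mb : ℕ) * n + (c : ℕ) = t →
      ¬(i = mb ∨ oePat ((i : ℕ) + 1) ((mb : ℕ) + 1)) → Lf (i, a) (mb, c) = 0 := by
    intro t
    induction t using Nat.strong_induction_on with
    | _ t IH =>
    intro mb c i a ht hna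
    push_neg at hna
    obtain ⟨hne, hnp⟩ := hna
    have hneN : (i : ℕ) ≠ (mb : ℕ) := fun h => by
      apply hne
      have : i = mb := Fin.ext h
      rw [this]
    by_cases hom : oddEvenLe ((mb : ℕ) + 1) ((i : ℕ) + 1)
    · -- column block strictly precedes row block
      have hbr : bRank N (mb : ℕ) < bRank N (i : ℕ) :=
        (bRank_lt_iff mb.isLt i.isLt).mpr ⟨hom, fun h => hneN h.symm⟩
      have hΨ : Ψ (i, a) (mb, c) = 0 :=
        htri i mb a c (gap_lemma hom hneN hnp)
      have hsum : ∑ k : Fin N × Fin n, Lf (i, a) k * Lf (mb, c) k = 0 := by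
        have hh := congrFun (congrFun hmul (i, a)) (mb, c)
        rw [Matrix.mul_apply] at hh
        simp only [Matrix.transpose_apply] at hh
        rw [hh, hΨ]
      have hterm : ∀ k ∈ Finset.univ, k ≠ ((mb, c) : Fin N × Fin n) →
          Lf (i, a) k * Lf (mb, c) k = 0 := by
        rintro ⟨m', c'⟩ - hk
        rcases lt_trichotomy (bRank N (m' : ℕ) * n + (c' : ℕ))
          (bRank N (mb : ℕ) * n + (c : ℕ)) with hlt | heq | hgt
        · rcases rank_lt_decomp c'.isLt c.isLt hlt with hb | ⟨hbeq, hcc⟩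
          · -- strictly earlier block
            have hm'mb : oddEvenLe ((m' : ℕ) + 1) ((mb : ℕ) + 1) ∧ (m' : ℕ) ≠ (mb : ℕ) :=
              (bRank_lt_iff m'.isLt mb.isLt).mp hb
            have hm'i : bRank N (m' : ℕ) < bRank N (i : ℕ) := hb.trans hbr
            have him' : (i : ℕ) ≠ (m' : ℕ) := fun h => by
              rw [h] at hm'i; omega
            by_cases hp2 : oePat ((mb : ℕ) + 1) ((m' : ℕ) + 1)
            · by_cases hp1 : oePat ((i : ℕ) + 1) ((m' : ℕ) + 1)
              · exfalso
                rcases oePat_closure hp1 hp2 hom with h | h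
                · exact hneN (by omega)
                · exact hnp h
              · rw [IH _ (ht ▸ hlt) m' c' i a rfl (by push_neg; exact ⟨fun h => him' (by rw [h]), hp1⟩),
                  zero_mul]
            · rw [IH _ (ht ▸ hlt) m' c' mb c rfl
                (by push_neg; exact ⟨fun h => hm'mb.2 (by rw [h]), hp2⟩), mul_zero]
          · -- same block, smaller inner index
            have hm : m' = mb := Fin.ext (bRank_inj m'.isLt mb.isLt hbeq)
            subst hm
            rw [IH _ (ht ▸ hlt) m' c' i a rfl (by push_neg; exact ⟨hne, hnp⟩), zero_mul]
        · exfalso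
          obtain ⟨h1, h2⟩ := rank_eq_decomp c'.isLt c.isLt heq
          exact hk (Prod.ext (Fin.ext (bRank_inj m'.isLt mb.isLt h1)) (Fin.ext h2))
        · rw [hT (mb, c) (m', c') hgt, mul_zero]
      have hsingle := Finset.sum_eq_single ((mb, c) : Fin N × Fin n) hterm
        (fun h => absurd (Finset.mem_univ _) h)
      rw [hsingle] at hsum
      rcases mul_eq_zero.mp hsum with h | h
      · exact h
      · exact absurd h (ne_of_gt (hdiagpos mb c))
    · -- row block strictly precedes column block: triangularity
      have h2 : oddEvenLe ((i : ℕ) + 1) ((mb : ℕ) + 1) := (oddEvenLe_total _ _).resolve_left hom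
      exact hT (i, a) (mb, c) (hOR i mb a c (Or.inl ⟨h2, by omega⟩))
  refine ⟨Lf, ?_, hdiagpos, hmul, ?_⟩
  · intro i j a b h
    exact hT (i, a) (j, b) (hOR i j a b h)
  · intro i j h1 h2 a b
    refine key _ j b i a rfl ?_
    push_neg
    refine ⟨fun h => h1.2 (by rw [h]), ?_⟩
    exact h2
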